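/- Key step in the proof that supersymmetric increments between x-points preserve non-emptiness of bow varieties (preservation of condition (S1)): Let V and U be finite-dimensional complex vector spaces, A : V → U and b : V → ℂ linear maps, B an endomorphism of V, u₀ ∈ U a vector, and c ∈ ℂ such that B − c·id_V is invertible. Define on V ⊕ ℂ the linear maps A'(x,λ) = A(x) + λ·u₀ (into U), b'(x,λ) = b(x) + λ (into ℂ), and the endomorphism B'(x,λ) = (B(x), c·λ). If the only B-invariant subspace of V contained in ker A ∩ ker b is the zero subspace, then the only B'-invariant subspace of V ⊕ ℂ contained in ker A' ∩ ker b' is the zero subspace. -/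
import Mathlib


/-- **Preservation of condition (S1) under supersymmetric increments between x-points.**
Let `V`, `U` be finite-dimensional complex vector spaces, `A : V → U`, `b : V → ℂ` linear,
`B` an endomorphism of `V`, `u₀ ∈ U`, and `c ∈ ℂ` with `B - c·id` invertible.  Define on
`V ⊕ ℂ` the maps `A' (x, l) = A x + l • u₀`, `b' (x, l) = b x + l`, and
`B' (x, l) = (B x, c * l)`.  If the only `B`-invariant subspace of `V` contained in
`ker A ∩ ker b` is `0`, then the only `B'`-invariant subspace of `V ⊕ ℂ` contained in
`ker A' ∩ ker b'` is `0`. -/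
theorem condition_S1_preserved
    {V U : Type*} [AddCommGroup V] [Module ℂ V] [FiniteDimensional ℂ V]
    [AddCommGroup U] [Module ℂ U] [FiniteDimensional ℂ U]
    (A : V →ₗ[ℂ] U) (b : V →ₗ[ℂ] ℂ) (B : V →ₗ[ℂ] V) (u₀ : U) (c : ℂ)
    (hBc : Function.Bijective (B - c • (LinearMap.id : V →ₗ[ℂ] V)))
    (A' : V × ℂ →ₗ[ℂ] U) (hA' : ∀ (x : V) (l : ℂ), A' (x, l) = A x + l • u₀)
    (b' : V × ℂ →ₗ[ℂ] ℂ) (hb' : ∀ (x : V) (l : ℂ), b' (x, l) = b x + l)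
    (B' : V × ℂ →ₗ[ℂ] V × ℂ) (hB' : ∀ (x : V) (l : ℂ), B' (x, l) = (B x, c * l))
    (hS1 : ∀ S : Submodule ℂ V, (∀ x ∈ S, B x ∈ S) →
      S ≤ LinearMap.ker A ⊓ LinearMap.ker b → S = ⊥) :
    ∀ S : Submodule ℂ (V × ℂ), (∀ z ∈ S, B' z ∈ S) →
      S ≤ LinearMap.ker A' ⊓ LinearMap.ker b' → S = ⊥ := by
  intro S hinv hle
  -- T = preimage of S under the inclusion x ↦ (x, 0)
  set T : Submodule ℂ V := S.comap (LinearMap.inl ℂ V ℂ) with hT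
  have hTmem : ∀ x : V, x ∈ T ↔ (x, (0:ℂ)) ∈ S := by
    intro x; rfl
  have hTinv : ∀ x ∈ T, B x ∈ T := by
    intro x hx
    have h1 : B' (x, 0) ∈ S := hinv _ ((hTmem x).mp hx)
    rw [hB'] at h1
    simpa [hTmem] using h1
  have hTle : T ≤ LinearMap.ker A ⊓ LinearMap.ker b := by
    intro x hx
    have hxS := (hTmem x).mp hx
    have h1 := hle hxS
    simp only [Submodule.mem_inf, LinearMap.mem_ker] at h1 ⊢
    rw [hA', hb'] at h1
    simpa using h1
  have hT0 : T = ⊥ := hS1 T hTinv hTle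
  -- now show S = ⊥
  rw [Submodule.eq_bot_iff]
  rintro ⟨x, l⟩ hz
  have hBz : ((B - c • (LinearMap.id : V →ₗ[ℂ] V)) x, (0:ℂ)) ∈ S := by
    have h1 : B' (x, l) - c • (x, l) ∈ S := S.sub_mem (hinv _ hz) (S.smul_mem c hz)
    rw [hB'] at h1
    have : ((B x, c * l) - c • ((x, l) : V × ℂ))
        = ((B - c • (LinearMap.id : V →ₗ[ℂ] V)) x, (0:ℂ)) := by
      simp [Prod.ext_iff, sub_eq_zero, smul_eq_mul]
    rwa [this] at h1
  have hx0 : x = 0 := by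
    have : (B - c • (LinearMap.id : V →ₗ[ℂ] V)) x ∈ T := (hTmem _).mpr hBz
    rw [hT0, Submodule.mem_bot] at this
    have h0 : (B - c • (LinearMap.id : V →ₗ[ℂ] V)) x
        = (B - c • (LinearMap.id : V →ₗ[ℂ] V)) 0 := by simpa using this
    exact hBc.injective h0
  have hl0 : l = 0 := by
    have h1 : b' (x, l) = 0 := (Submodule.mem_inf.mp (hle hz)).2
    rw [hb', hx0] at h1
    simpa using h1
  simp [hx0, hl0]
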